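/- For any pair of nondegenerate hierarchies 𝒜, ℬ over a finite set S, the closed-form NNI navigation distance is bounded above by three halves of the crossing dissimilarity: d_Nav(𝒜,ℬ) ≤ (3/2)·d_CM(𝒜,ℬ). -/

import Mathlib

open scoped Classical

namespace TreeDist

variable {α : Type*} [DecidableEq α]

/-- Two finite sets are compatible if they are disjoint or nested. -/
def Compatible (A B : Finset α) : Prop :=
  A ∩ B = ∅ ∨ A ⊆ B ∨ B ⊆ A

/-- A hierarchy over `S`: a laminar family of nonempty subsets of `S`
containing `S` and all singletons. -/
def IsHierarchy (S : Finset α) (F : Finset (Finset α)) : Prop :=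
  (∀ A ∈ F, A ⊆ S ∧ A.Nonempty) ∧
  (∀ A ∈ F, ∀ B ∈ F, Compatible A B) ∧
  S ∈ F ∧ ∀ i ∈ S, ({i} : Finset α) ∈ F

/-- A nondegenerate (binary) hierarchy: a hierarchy with `2|S| - 1` clusters,
equivalently a maximal laminar family. -/
def Nondeg (S : Finset α) (F : Finset (Finset α)) : Prop :=
  IsHierarchy S F ∧ F.card = 2 * S.card - 1

/-- `P` is the parent of `I` in the family `F`: the smallest cluster of `F`
strictly containing `I`. -/
def IsParent (F : Finset (Finset α)) (I P : Finset α) : Prop :=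
  P ∈ F ∧ I ⊂ P ∧ ∀ Q ∈ F, I ⊂ Q → P ⊆ Q

/-- `G` is the result of an NNI move on `F` at some grandchild `C`:
`G = (F \ {parent C}) ∪ {grandparent C \ C}`. -/
def IsNNIMove (F G : Finset (Finset α)) : Prop :=
  ∃ C P GP, C ∈ F ∧ IsParent F C P ∧ IsParent F P GP ∧
    G = insert (GP \ C) (F.erase P)

/-- Restriction of a family of sets to `K`: `{A ∩ K : A ∈ F, A ∩ K ≠ ∅}`. -/
noncomputable def restrictFam (F : Finset (Finset α)) (K : Finset α) : Finset (Finset α) :=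
  (F.image (· ∩ K)).filter fun A => A.Nonempty

/-- The cardinality of the smallest common ancestor of `i` and `j` in `F`, i.e. the
minimum cardinality of a cluster of `F` containing both `i` and `j`. -/
noncomputable def caCard (F : Finset (Finset α)) (i j : α) : ℕ :=
  sInf {n | ∃ A ∈ F, i ∈ A ∧ j ∈ A ∧ A.card = n}

/-- Ultrametric representation `U(F)_{ij} = |ca(i,j)| - 1`. -/
noncomputable def Umat (F : Finset (Finset α)) (i j : α) : ℤ :=
  (caCard F i j : ℤ) - 1

/-- Cluster-cardinality distance `d_CC = (1/2) Σ_{i,j ∈ S} |U(F)_{ij} - U(G)_{ij}|`. -/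
noncomputable def dCC (S : Finset α) (F G : Finset (Finset α)) : ℚ :=
  (1 / 2) * ∑ i ∈ S, ∑ j ∈ S, |((Umat F i j : ℚ)) - ((Umat G i j : ℚ))|

/-- Robinson–Foulds distance: half the size of the symmetric difference of cluster sets. -/
noncomputable def dRF (F G : Finset (Finset α)) : ℚ :=
  (((F \ G) ∪ (G \ F)).card : ℚ) / 2

/-- Crossing dissimilarity: the number of incompatible pairs of clusters. -/
noncomputable def dCM (F G : Finset (Finset α)) : ℕ :=
  ((F ×ˢ G).filter fun p => ¬ Compatible p.1 p.2).card

/-- Depth of a cluster: the number of its strict ancestors in `F`. -/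
noncomputable def depth (F : Finset (Finset α)) (I : Finset α) : ℕ :=
  (F.filter fun J => I ⊂ J).card

/-- The children of `I` in `F`: the clusters of `F` whose parent is `I`. -/
noncomputable def children (F : Finset (Finset α)) (I : Finset α) : Finset (Finset α) :=
  F.filter fun C => IsParent F C I

/-- `η_{F,G}(I,J)`: the number of members of `(children I)|_J` incompatible with
the family `(children J)|_I`. -/
noncomputable def eta (F G : Finset (Finset α)) (I J : Finset α) : ℕ :=
  ((restrictFam (children F I) J).filter
    fun A => ∃ B ∈ restrictFam (children G J) I, ¬ Compatible A B).card

/-- `θ(x) = (x² + x)/2`. -/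
def theta (x : ℕ) : ℚ := ((x : ℚ) ^ 2 + x) / 2

/-- Closed-form NNI navigation distance `d_Nav(F,G) = Σ_{I∈F, J∈G} θ(η_{F,G}(I,J))`. -/
noncomputable def dNav (F G : Finset (Finset α)) : ℚ :=
  ∑ I ∈ F, ∑ J ∈ G, theta (eta F G I J)


set_option linter.unusedSectionVars false
set_option linter.unusedVariables false

/-! ### Auxiliary lemmas -/

lemma parent_unique {F : Finset (Finset α)} {C P P' : Finset α}
    (h : IsParent F C P) (h' : IsParent F C P') : P = P' :=
  subset_antisymm (h.2.2 P' h'.1 h'.2.1) (h'.2.2 P h.1 h.2.1)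

lemma exists_parent {S : Finset α} {F : Finset (Finset α)} (hF : IsHierarchy S F)
    {C : Finset α} (hC : C ∈ F) (hne : C ≠ S) : ∃ P, IsParent F C P := by
  obtain ⟨hsub, hlam, hSF, _⟩ := hF
  have hCS : C ⊂ S := HasSubset.Subset.ssubset_of_ne (hsub C hC).1 hne
  have hCne : C.Nonempty := (hsub C hC).2
  set T := F.filter fun Q => C ⊂ Q with hT
  have hTne : T.Nonempty := ⟨S, by simp [hT, hSF, hCS]⟩
  obtain ⟨P, hPT, hmin⟩ := T.exists_min_image Finset.card hTne
  rw [hT, Finset.mem_filter] at hPT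
  refine ⟨P, hPT.1, hPT.2, ?_⟩
  intro Q hQ hCQ
  have hQT : Q ∈ T := Finset.mem_filter.mpr ⟨hQ, hCQ⟩
  have hcard := hmin Q hQT
  rcases hlam P hPT.1 Q hQ with h | h | h
  · exfalso
    obtain ⟨x, hx⟩ := hCne
    have : x ∈ P ∩ Q := Finset.mem_inter.mpr ⟨hPT.2.subset hx, hCQ.subset hx⟩
    rw [h] at this
    exact absurd this (Finset.notMem_empty x)
  · exact h
  · exact (Finset.eq_of_subset_of_card_le h hcard) ▸ Finset.Subset.refl _

lemma mem_children {F : Finset (Finset α)} {C I : Finset α} :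
    C ∈ children F I ↔ C ∈ F ∧ IsParent F C I := Finset.mem_filter

noncomputable def parentOf (F : Finset (Finset α)) (C : Finset α) : Finset α :=
  if h : ∃ P, IsParent F C P then h.choose else ∅

lemma parentOf_spec {F : Finset (Finset α)} {C : Finset α}
    (h : ∃ P, IsParent F C P) : IsParent F C (parentOf F C) := by
  rw [parentOf, dif_pos h]; exact h.choose_spec

lemma sum_children_card {S : Finset α} {F : Finset (Finset α)} (hF : IsHierarchy S F) :
    ∑ I ∈ F, (children F I).card = F.card - 1 := by
  have hSF := hF.2.2.1
  rw [← Finset.card_erase_of_mem hSF]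
  have H : ∀ C ∈ F.erase S, parentOf F C ∈ F := by
    intro C hC
    rw [Finset.mem_erase] at hC
    exact (parentOf_spec (exists_parent hF hC.2 hC.1)).1
  rw [Finset.card_eq_sum_card_fiberwise H]
  apply Finset.sum_congr rfl
  intro I hI
  congr 1
  ext C
  rw [children, Finset.mem_filter, Finset.mem_filter, Finset.mem_erase]
  constructor
  · rintro ⟨hCF, hp⟩
    have hCS : C ≠ S := by
      intro h
      have h1 : S ⊂ I := h ▸ hp.2.1
      exact h1.not_subset (hF.1 I hp.1).1
    exact ⟨⟨hCS, hCF⟩, parent_unique (parentOf_spec (exists_parent hF hCF hCS)) hp⟩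
  · rintro ⟨⟨hCS, hCF⟩, hp⟩
    exact ⟨hCF, hp ▸ parentOf_spec (exists_parent hF hCF hCS)⟩

lemma card_filter_singletons {S : Finset α} {F : Finset (Finset α)} (hF : IsHierarchy S F) :
    (F.filter fun A => A.card = 1).card = S.card := by
  have heq : F.filter (fun A => A.card = 1) = S.image fun i => ({i} : Finset α) := by
    ext A
    rw [Finset.mem_filter, Finset.mem_image]
    constructor
    · rintro ⟨hA, hc⟩
      obtain ⟨x, rfl⟩ := Finset.card_eq_one.mp hc
      exact ⟨x, (hF.1 _ hA).1 (Finset.mem_singleton_self x), rfl⟩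
    · rintro ⟨i, hi, rfl⟩
      exact ⟨hF.2.2.2 i hi, Finset.card_singleton i⟩
  rw [heq, Finset.card_image_of_injective _ Finset.singleton_injective]

lemma exists_child_mem {S : Finset α} {F : Finset (Finset α)} (hF : IsHierarchy S F)
    {I : Finset α} (hI : I ∈ F) (h2 : 2 ≤ I.card) {x : α} (hx : x ∈ I) :
    ∃ C ∈ children F I, x ∈ C := by
  set T := F.filter fun Q => x ∈ Q ∧ Q ⊂ I with hT
  have hxT : ({x} : Finset α) ∈ T := by
    have hxS : x ∈ S := (hF.1 I hI).1 hx
    refine Finset.mem_filter.mpr ⟨hF.2.2.2 x hxS, Finset.mem_singleton_self x, ?_⟩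
    refine HasSubset.Subset.ssubset_of_ne (Finset.singleton_subset_iff.mpr hx) ?_
    intro h
    rw [← h, Finset.card_singleton] at h2
    omega
  obtain ⟨Q, hQT, hmax⟩ := T.exists_max_image Finset.card ⟨_, hxT⟩
  rw [hT, Finset.mem_filter] at hQT
  obtain ⟨hQF, hxQ, hQI⟩ := hQT
  have hQS : Q ≠ S := by
    intro h
    exact (h ▸ hQI).not_subset (hF.1 I hI).1
  obtain ⟨P, hP⟩ := exists_parent hF hQF hQS
  have hPI : P ⊆ I := hP.2.2 I hI hQI
  have hPeq : P = I := by
    by_contra hne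
    have hPT : P ∈ T := Finset.mem_filter.mpr
      ⟨hP.1, hP.2.1.subset hxQ, HasSubset.Subset.ssubset_of_ne hPI hne⟩
    exact absurd (Finset.card_lt_card hP.2.1) (not_lt.mpr (hmax P hPT))
  exact ⟨Q, mem_children.mpr ⟨hQF, hPeq ▸ hP⟩, hxQ⟩

lemma children_pairwise_disjoint {F : Finset (Finset α)} {I C C' : Finset α}
    (hC : C ∈ children F I) (hC' : C' ∈ children F I)
    (hlam : Compatible C C') (hne : C ≠ C') : C ∩ C' = ∅ := by
  rcases hlam with h | h | h
  · exact h
  · exfalso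
    have := (mem_children.mp hC).2.2.2 C' (mem_children.mp hC').1
      (HasSubset.Subset.ssubset_of_ne h hne)
    exact ((mem_children.mp hC').2.2.1.trans_subset this).ne rfl
  · exfalso
    have := (mem_children.mp hC').2.2.2 C (mem_children.mp hC).1
      (HasSubset.Subset.ssubset_of_ne h hne.symm)
    exact ((mem_children.mp hC).2.2.1.trans_subset this).ne rfl

lemma two_le_children_card {S : Finset α} {F : Finset (Finset α)} (hF : IsHierarchy S F)
    {I : Finset α} (hI : I ∈ F) (h2 : 2 ≤ I.card) : 2 ≤ (children F I).card := by
  have hIne : I.Nonempty := by rw [← Finset.card_pos]; omega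
  obtain ⟨x, hx⟩ := hIne
  obtain ⟨C, hC, hxC⟩ := exists_child_mem hF hI h2 hx
  obtain ⟨y, hyI, hyC⟩ := Finset.exists_of_ssubset (mem_children.mp hC).2.2.1
  obtain ⟨C', hC', hyC'⟩ := exists_child_mem hF hI h2 hyI
  have : C ≠ C' := fun h => hyC (h ▸ hyC')
  exact Finset.one_lt_card.mpr ⟨C, hC, C', hC', this⟩

lemma children_card_le_two {S : Finset α} {F : Finset (Finset α)} (hF : Nondeg S F)
    {I : Finset α} (hI : I ∈ F) : (children F I).card ≤ 2 := by
  obtain ⟨hH, hcard⟩ := hF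
  by_cases hI2 : 2 ≤ I.card
  · -- counting argument
    have hS1 : 1 ≤ S.card := Finset.card_pos.mpr ((hH.1 S hH.2.2.1).2)
    set T := F.filter fun A => 2 ≤ A.card with hTdef
    have hIT : I ∈ T := Finset.mem_filter.mpr ⟨hI, hI2⟩
    have hTcard : T.card = S.card - 1 := by
      have hpart := Finset.card_filter_add_card_filter_not
        (s := F) (p := fun A => A.card = 1)
      have hneg : F.filter (fun A => ¬ A.card = 1) = T := by
        apply Finset.filter_congr
        intro A hA
        have h1 : 1 ≤ A.card := Finset.card_pos.mpr (hH.1 A hA).2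
        omega
      rw [hneg, card_filter_singletons hH] at hpart
      omega
    have hsumF : ∑ J ∈ F, (children F J).card = 2 * S.card - 2 := by
      rw [sum_children_card hH, hcard]
      omega
    have hsumT : ∑ J ∈ T, (children F J).card ≤ 2 * S.card - 2 :=
      hsumF ▸ Finset.sum_le_sum_of_subset (Finset.filter_subset _ _)
    have hlow : ∀ J ∈ T.erase I, 2 ≤ (children F J).card := by
      intro J hJ
      have hJT := Finset.mem_of_mem_erase hJ
      rw [hTdef, Finset.mem_filter] at hJT
      exact two_le_children_card hH hJT.1 hJT.2
    have herase : 2 * (T.card - 1) ≤ ∑ J ∈ T.erase I, (children F J).card := by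
      calc 2 * (T.card - 1) = (T.erase I).card * 2 := by
            rw [Finset.card_erase_of_mem hIT]; ring
        _ ≤ ∑ J ∈ T.erase I, (children F J).card := Finset.card_nsmul_le_sum _ _ _ hlow
    have hsplit : ∑ J ∈ T, (children F J).card
        = (children F I).card + ∑ J ∈ T.erase I, (children F J).card :=
      (Finset.add_sum_erase T _ hIT).symm
    have hT1 : 1 ≤ T.card := Finset.card_pos.mpr ⟨I, hIT⟩
    omega
  · -- I is a singleton; it has no children
    have : children F I = ∅ := by
      rw [Finset.eq_empty_iff_forall_notMem]
      intro C hC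
      have h1 : 1 ≤ C.card := Finset.card_pos.mpr (hH.1 C (mem_children.mp hC).1).2
      have h2 : C.card < I.card := Finset.card_lt_card (mem_children.mp hC).2.2.1
      omega
    rw [this, Finset.card_empty]
    omega

lemma eta_le_two {S : Finset α} {F G : Finset (Finset α)} (hF : Nondeg S F)
    {I J : Finset α} (hI : I ∈ F) : eta F G I J ≤ 2 :=
  calc eta F G I J ≤ (restrictFam (children F I) J).card := Finset.card_filter_le _ _
    _ ≤ ((children F I).image (· ∩ J)).card := Finset.card_filter_le _ _
    _ ≤ (children F I).card := Finset.card_image_le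
    _ ≤ 2 := children_card_le_two hF hI

lemma cross_lift {C D I J : Finset α} (hCI : C ⊆ I) (hDJ : D ⊆ J)
    (h : ¬ Compatible (C ∩ J) (D ∩ I)) : ¬ Compatible C D := by
  intro hc
  apply h
  rcases hc with h' | h' | h'
  · left
    rw [Finset.eq_empty_iff_forall_notMem]
    intro x hx
    simp only [Finset.mem_inter] at hx
    have : x ∈ C ∩ D := Finset.mem_inter.mpr ⟨hx.1.1, hx.2.1⟩
    rw [h'] at this
    exact Finset.notMem_empty x this
  · right; left
    intro x hx
    simp only [Finset.mem_inter] at hx ⊢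
    exact ⟨h' hx.1, hCI hx.1⟩
  · right; right
    intro x hx
    simp only [Finset.mem_inter] at hx ⊢
    exact ⟨h' hx.1, hDJ hx.1⟩

noncomputable def chooseC (F : Finset (Finset α)) (I J A : Finset α) : Finset α :=
  if h : ∃ C, C ∈ children F I ∧ C ∩ J = A then h.choose else ∅

lemma chooseC_spec {F : Finset (Finset α)} {I J A : Finset α}
    (h : ∃ C, C ∈ children F I ∧ C ∩ J = A) :
    chooseC F I J A ∈ children F I ∧ chooseC F I J A ∩ J = A := by
  rw [chooseC, dif_pos h]; exact h.choose_spec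

noncomputable def chooseD (G : Finset (Finset α)) (I J A : Finset α) : Finset α :=
  if h : ∃ D, D ∈ children G J ∧ ¬ Compatible A (D ∩ I) then h.choose else ∅

lemma chooseD_spec {G : Finset (Finset α)} {I J A : Finset α}
    (h : ∃ D, D ∈ children G J ∧ ¬ Compatible A (D ∩ I)) :
    chooseD G I J A ∈ children G J ∧ ¬ Compatible A (chooseD G I J A ∩ I) := by
  rw [chooseD, dif_pos h]; exact h.choose_spec

/-- The set of restricted children counted by `eta F G I J`. -/
noncomputable def etaSet (F G : Finset (Finset α)) (I J : Finset α) : Finset (Finset α) :=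
  (restrictFam (children F I) J).filter
    fun A => ∃ B ∈ restrictFam (children G J) I, ¬ Compatible A B

lemma mem_etaSet_elim {F G : Finset (Finset α)} {I J A : Finset α}
    (hA : A ∈ etaSet F G I J) :
    (∃ C, C ∈ children F I ∧ C ∩ J = A) ∧
      (∃ D, D ∈ children G J ∧ ¬ Compatible A (D ∩ I)) := by
  rw [etaSet, Finset.mem_filter, restrictFam, Finset.mem_filter, Finset.mem_image] at hA
  obtain ⟨⟨⟨C, hC, hCA⟩, -⟩, B, hB, hAB⟩ := hA
  rw [restrictFam, Finset.mem_filter, Finset.mem_image] at hB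
  obtain ⟨⟨D, hD, hDB⟩, -⟩ := hB
  exact ⟨⟨C, hC, hCA⟩, ⟨D, hD, hDB ▸ hAB⟩⟩

lemma sum_eta_le_dCM {S : Finset α} {F G : Finset (Finset α)}
    (hF : IsHierarchy S F) (hG : IsHierarchy S G) :
    ∑ I ∈ F, ∑ J ∈ G, eta F G I J ≤ dCM F G := by
  have hrw : ∑ I ∈ F, ∑ J ∈ G, eta F G I J
      = ((F ×ˢ G).sigma fun p => etaSet F G p.1 p.2).card := by
    rw [Finset.card_sigma, Finset.sum_product]
    rfl
  rw [hrw, dCM]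
  apply Finset.card_le_card_of_injOn
    (fun x => (chooseC F x.1.1 x.1.2 x.2, chooseD G x.1.1 x.1.2 x.2))
  · rintro ⟨⟨I, J⟩, A⟩ hx
    rw [Finset.mem_coe, Finset.mem_sigma, Finset.mem_product] at hx
    obtain ⟨⟨hIF, hJG⟩, hA⟩ := hx
    obtain ⟨hex1, hex2⟩ := mem_etaSet_elim hA
    obtain ⟨hCch, hCA⟩ := chooseC_spec hex1
    obtain ⟨hDch, hDB⟩ := chooseD_spec hex2
    rw [Finset.mem_coe, Finset.mem_filter, Finset.mem_product]
    refine ⟨⟨(mem_children.mp hCch).1, (mem_children.mp hDch).1⟩, ?_⟩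
    exact cross_lift (mem_children.mp hCch).2.2.1.subset
      (mem_children.mp hDch).2.2.1.subset (by rw [hCA]; exact hDB)
  · rintro ⟨⟨I₁, J₁⟩, A₁⟩ hx₁ ⟨⟨I₂, J₂⟩, A₂⟩ hx₂ heq
    simp only [Finset.coe_sigma, Set.mem_sigma_iff, Finset.mem_coe] at hx₁ hx₂
    obtain ⟨hp₁, hA₁⟩ := hx₁
    obtain ⟨hp₂, hA₂⟩ := hx₂
    obtain ⟨hex11, hex12⟩ := mem_etaSet_elim hA₁
    obtain ⟨hex21, hex22⟩ := mem_etaSet_elim hA₂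
    obtain ⟨hC1, hC1A⟩ := chooseC_spec hex11
    obtain ⟨hC2, hC2A⟩ := chooseC_spec hex21
    obtain ⟨hD1, -⟩ := chooseD_spec hex12
    obtain ⟨hD2, -⟩ := chooseD_spec hex22
    have hCeq : chooseC F I₁ J₁ A₁ = chooseC F I₂ J₂ A₂ := congrArg Prod.fst heq
    have hDeq : chooseD G I₁ J₁ A₁ = chooseD G I₂ J₂ A₂ := congrArg Prod.snd heq
    have hI : I₁ = I₂ :=
      parent_unique (mem_children.mp hC1).2 (hCeq ▸ (mem_children.mp hC2).2)
    have hJ : J₁ = J₂ :=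
      parent_unique (mem_children.mp hD1).2 (hDeq ▸ (mem_children.mp hD2).2)
    have hAeq : A₁ = A₂ := by rw [← hC1A, ← hC2A, hCeq, hJ]
    subst hI; subst hJ; subst hAeq
    rfl


theorem dNav_le_three_halves_dCM (S : Finset α) (F G : Finset (Finset α))
    (hF : Nondeg S F) (hG : Nondeg S G) :
    dNav F G ≤ (3 / 2) * (dCM F G : ℚ) := by
  have step1 : dNav F G ≤ ∑ I ∈ F, ∑ J ∈ G, (3 / 2) * (eta F G I J : ℚ) := by
    apply Finset.sum_le_sum
    intro I hI
    apply Finset.sum_le_sum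
    intro J hJ
    have h2 : eta F G I J ≤ 2 := eta_le_two hF hI
    set k := eta F G I J with hk
    interval_cases k <;> norm_num [theta]
  have step2 : ∑ I ∈ F, ∑ J ∈ G, (3 / 2) * (eta F G I J : ℚ)
      = (3 / 2) * ((∑ I ∈ F, ∑ J ∈ G, eta F G I J : ℕ) : ℚ) := by
    push_cast
    rw [Finset.mul_sum]
    apply Finset.sum_congr rfl
    intro I hI
    rw [Finset.mul_sum]
  have step3 : ((∑ I ∈ F, ∑ J ∈ G, eta F G I J : ℕ) : ℚ) ≤ (dCM F G : ℚ) := by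
    exact_mod_cast sum_eta_le_dCM hF.1 hG.1
  calc dNav F G ≤ _ := step1
    _ = _ := step2
    _ ≤ (3 / 2) * (dCM F G : ℚ) := by linarith

end TreeDist
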